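/- Let ξ_1,…,ξ_N be independent Bernoulli random variables with parameters p_j ∈ (0,1), let ξ̄ = (1/N)·Σ_{j=1}^N ξ_j and p̄ = (1/N)·Σ_{j=1}^N p_j. For any ε, δ ∈ (0,1), set A = ε·ln(1/ε) + (1−ε)·ln(1/(1−ε)) + (1/N)·ln(1/δ). If 1/(1 + exp(−A/(1−ε))) ≤ p̄ < 1, then P(ξ̄ ≤ ε) < δ. -/

import Mathlib

open MeasureTheory ProbabilityTheory Real

lemma bern_exp_integral {Ω : Type*} [MeasurableSpace Ω] (μ : Measure Ω) [IsProbabilityMeasure μ]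
    (X : Ω → ℝ) (hm : Measurable X) (hv : ∀ ω, X ω = 0 ∨ X ω = 1) (t : ℝ) :
    ∫ ω, Real.exp (t * X ω) ∂μ = 1 + (Real.exp t - 1) * (μ {ω | X ω = 1}).toReal := by
  have hS : MeasurableSet {ω | X ω = 1} := hm (measurableSet_singleton 1)
  have hfun : (fun ω => Real.exp (t * X ω))
      = fun ω => 1 + (Real.exp t - 1) * Set.indicator {ω | X ω = 1} (fun _ => (1:ℝ)) ω := by
    funext ω
    rcases hv ω with h | h
    · have hni : ω ∉ {ω | X ω = 1} := by simp [Set.mem_setOf_eq, h]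
      simp [h, Set.indicator_of_notMem hni]
    · have hmem : ω ∈ {ω | X ω = 1} := h
      simp [h, Set.indicator_of_mem hmem]
  rw [hfun, integral_add (integrable_const 1) (((integrable_const (1:ℝ)).indicator hS).const_mul _),
    integral_const_mul, integral_indicator_const _ hS]
  simp [Measure.real]

lemma prod_le_avg_pow {N : ℕ} (hN : 0 < N) (m : Fin N → ℝ) (hm : ∀ j, 0 ≤ m j) :
    ∏ j, m j ≤ ((N:ℝ)⁻¹ * ∑ j, m j) ^ N := by
  have hNne : (N:ℝ) ≠ 0 := Nat.cast_ne_zero.mpr hN.ne'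
  have hw : ∑ _j : Fin N, (N:ℝ)⁻¹ = 1 := by
    simp [Finset.sum_const, Finset.card_univ]
    exact mul_inv_cancel₀ hNne
  have h := Real.geom_mean_le_arith_mean_weighted Finset.univ (fun _ => (N:ℝ)⁻¹) m
    (fun i _ => by positivity) hw (fun i _ => hm i)
  have h2 : ∑ j, (N:ℝ)⁻¹ * m j = (N:ℝ)⁻¹ * ∑ j, m j := by rw [Finset.mul_sum]
  calc ∏ j, m j = (∏ j, m j ^ ((N:ℝ)⁻¹)) ^ N := by
        rw [← Finset.prod_pow]
        refine Finset.prod_congr rfl fun j _ => ?_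
        rw [← Real.rpow_natCast (m j ^ ((N:ℝ)⁻¹)) N, ← Real.rpow_mul (hm j),
          inv_mul_cancel₀ hNne, Real.rpow_one]
    _ ≤ ((N:ℝ)⁻¹ * ∑ j, m j) ^ N := by
        apply pow_le_pow_left₀ (Finset.prod_nonneg fun j _ => Real.rpow_nonneg (hm j) _)
        rw [← h2]; exact h

set_option maxHeartbeats 1000000 in
theorem bernoulli_average_lower_tail
    {Ω : Type*} [MeasurableSpace Ω] (μ : Measure Ω) [IsProbabilityMeasure μ]
    {N : ℕ} (hN : 0 < N)
    (ξ : Fin N → Ω → ℝ) (hξm : ∀ j, Measurable (ξ j))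
    (hξval : ∀ j ω, ξ j ω = 0 ∨ ξ j ω = 1)
    (hindep : iIndepFun ξ μ)
    (p : Fin N → ℝ) (hp0 : ∀ j, 0 < p j) (hp1 : ∀ j, p j < 1)
    (hpe : ∀ j, (μ {ω | ξ j ω = 1}).toReal = p j)
    (ε δ : ℝ) (hε0 : 0 < ε) (hε1 : ε < 1) (hδ0 : 0 < δ) (hδ1 : δ < 1)
    (hpbar : 1 / (1 + Real.exp (-(ε * Real.log (1 / ε) + (1 - ε) * Real.log (1 / (1 - ε))
          + (N : ℝ)⁻¹ * Real.log (1 / δ)) / (1 - ε)))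
      ≤ (N : ℝ)⁻¹ * ∑ j, p j)
    (hpbar1 : (N : ℝ)⁻¹ * ∑ j, p j < 1) :
    (μ {ω | (N : ℝ)⁻¹ * ∑ j, ξ j ω ≤ ε}).toReal < δ := by
  haveI : Nonempty (Fin N) := ⟨⟨0, hN⟩⟩
  have hNR : (0:ℝ) < N := by exact_mod_cast hN
  have hNne : (N:ℝ) ≠ 0 := ne_of_gt hNR
  have hε1' : (0:ℝ) < 1 - ε := by linarith
  set q : ℝ := (N:ℝ)⁻¹ * ∑ j, p j with hqdef
  have hq1 : q < 1 := hpbar1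
  have hq0 : 0 < q := by
    rw [hqdef]
    exact mul_pos (inv_pos.2 hNR) (Finset.sum_pos (fun j _ => hp0 j) Finset.univ_nonempty)
  have hq1' : (0:ℝ) < 1 - q := by linarith
  have hlε : Real.log ε < 0 := Real.log_neg hε0 hε1
  have hlδ : Real.log δ < 0 := Real.log_neg hδ0 hδ1
  set A : ℝ := ε * Real.log (1/ε) + (1-ε) * Real.log (1/(1-ε)) + (N:ℝ)⁻¹ * Real.log (1/δ)
    with hAdef
  have hA : A = -(ε * Real.log ε) - (1-ε) * Real.log (1-ε) - (N:ℝ)⁻¹ * Real.log δ := by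
    rw [hAdef, one_div, one_div, one_div, Real.log_inv, Real.log_inv, Real.log_inv]; ring
  set E : ℝ := Real.exp (-A/(1-ε)) with hEdef
  have hE0 : 0 < E := Real.exp_pos _
  have h1E : (0:ℝ) < 1 + E := by linarith
  have hpbar' : 1/(1+E) ≤ q := hpbar
  -- ε < q
  have hεq : ε < q := by
    refine lt_of_lt_of_le ?_ hpbar'
    rw [lt_div_iff₀ h1E]
    have hlog : -A/(1-ε) < Real.log ((1-ε)/ε) := by
      rw [div_lt_iff₀ hε1', Real.log_div (ne_of_gt hε1') (ne_of_gt hε0), hA]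
      have hc : (N:ℝ)⁻¹ * Real.log δ < 0 :=
        mul_neg_of_pos_of_neg (inv_pos.2 hNR) hlδ
      nlinarith [hlε, hc]
    have hElt : E < (1-ε)/ε := by
      rw [hEdef]
      exact (Real.exp_lt_exp.2 (lt_of_le_of_lt (le_refl _) hlog)).trans_le
        (le_of_eq (Real.exp_log (div_pos hε1' hε0)))
    rw [lt_div_iff₀ hε0] at hElt
    nlinarith
  -- 1 - q < E and log bound
  have hqE : 1 - q < E := by
    have h : 1 - E < 1/(1+E) := by
      rw [lt_div_iff₀ h1E]; nlinarith
    linarith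
  have hlog1q : Real.log (1-q) < -A/(1-ε) := by
    calc Real.log (1-q) < Real.log E := Real.log_lt_log hq1' hqE
      _ = -A/(1-ε) := by rw [hEdef, Real.log_exp]
  -- the tilt parameter
  set r : ℝ := ε*(1-q)/(q*(1-ε)) with hrdef
  have hr0 : 0 < r := div_pos (mul_pos hε0 hq1') (mul_pos hq0 hε1')
  have hr1 : r < 1 := by
    rw [hrdef, div_lt_one (mul_pos hq0 hε1')]; nlinarith
  set t : ℝ := Real.log r with htdef
  have ht0 : t ≤ 0 := le_of_lt (Real.log_neg hr0 hr1)
  have hexpt : Real.exp t = r := Real.exp_log hr0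
  -- mgf of each coordinate
  have hmgf : ∀ j, mgf (ξ j) μ t = 1 + (r - 1) * p j := by
    intro j
    simp only [mgf]
    rw [bern_exp_integral μ (ξ j) (hξm j) (hξval j) t, hpe j, hexpt]
  -- the sum and its properties
  have hSmeas : Measurable (∑ j, ξ j) := by
    have h : (∑ j, ξ j) = fun ω => ∑ j, ξ j ω := by funext ω; simp
    rw [h]; exact Finset.measurable_sum _ (fun j _ => hξm j)
  have hint : Integrable (fun ω => Real.exp (t * (∑ j, ξ j) ω)) μ := by
    refine Integrable.mono' (integrable_const (1:ℝ))
      ((hSmeas.const_mul t).exp).aestronglyMeasurable ?_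
    filter_upwards with ω
    rw [Real.norm_eq_abs, abs_of_pos (Real.exp_pos _)]
    have hS0 : 0 ≤ (∑ j, ξ j) ω := by
      simp only [Finset.sum_apply]
      exact Finset.sum_nonneg fun j _ => by rcases hξval j ω with h|h <;> simp [h]
    calc Real.exp (t * (∑ j, ξ j) ω) ≤ Real.exp 0 := by
          apply Real.exp_le_exp.2
          have h := mul_le_mul_of_nonneg_right ht0 hS0
          simpa using h
      _ = 1 := Real.exp_zero
  -- Chernoff
  have hcher := measure_le_le_exp_mul_mgf (μ := μ) (X := ∑ j, ξ j) (ε * N) ht0 hint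
  have hsetEq : {ω | (N:ℝ)⁻¹ * ∑ j, ξ j ω ≤ ε} = {ω | (∑ j, ξ j) ω ≤ ε * N} := by
    ext ω
    simp only [Set.mem_setOf_eq, Finset.sum_apply]
    rw [inv_mul_eq_div, div_le_iff₀ hNR]
  -- product form of mgf
  have hprod : mgf (∑ j, ξ j) μ t = ∏ j, (1 + (r-1) * p j) := by
    rw [hindep.mgf_sum hξm Finset.univ]
    exact Finset.prod_congr rfl fun j _ => hmgf j
  have hmpos : ∀ j, 0 ≤ 1 + (r-1)*p j := fun j => by nlinarith [hr0, (hp0 j).le, (hp1 j).le]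
  have hamgm : ∏ j, (1 + (r-1)*p j) ≤ ((N:ℝ)⁻¹ * ∑ j, (1 + (r-1)*p j))^N :=
    prod_le_avg_pow hN _ hmpos
  have hsum : ∑ j, (1 + (r-1)*p j) = (N:ℝ) + (r-1) * ∑ j, p j := by
    rw [Finset.sum_add_distrib, Finset.sum_const, ← Finset.mul_sum]
    simp [Finset.card_univ]
  have havg : (N:ℝ)⁻¹ * ∑ j, (1 + (r-1)*p j) = (1-q)/(1-ε) := by
    rw [hsum]
    have h1 : (N:ℝ)⁻¹ * ((N:ℝ) + (r-1) * ∑ j, p j) = 1 + (r-1) * q := by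
      rw [hqdef]; field_simp
    rw [h1, hrdef]
    field_simp
    ring
  have hpow : ((1-q)/(1-ε))^N = Real.exp ((N:ℝ) * Real.log ((1-q)/(1-ε))) := by
    rw [Real.exp_nat_mul, Real.exp_log (div_pos hq1' hε1')]
  -- the key exponent inequality
  have hlogr : t = Real.log ε + Real.log (1-q) - Real.log q - Real.log (1-ε) := by
    rw [htdef, hrdef, Real.log_div (mul_pos hε0 hq1').ne' (mul_pos hq0 hε1').ne',
      Real.log_mul hε0.ne' hq1'.ne', Real.log_mul hq0.ne' hε1'.ne']
    ring
  have hlogfrac : Real.log ((1-q)/(1-ε)) = Real.log (1-q) - Real.log (1-ε) :=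
    Real.log_div hq1'.ne' hε1'.ne'
  have hkey : -t * (ε * N) + (N:ℝ) * Real.log ((1-q)/(1-ε)) < Real.log δ := by
    have hperunit : -ε * t + Real.log ((1-q)/(1-ε)) < (N:ℝ)⁻¹ * Real.log δ := by
      have hlq : Real.log q < 0 := Real.log_neg hq0 hq1
      have h1 : ε * Real.log q < 0 := mul_neg_of_pos_of_neg hε0 hlq
      have h2 : (1-ε) * Real.log (1-q) < (1-ε) * (-A/(1-ε)) :=
        (mul_lt_mul_iff_right₀ hε1').2 hlog1q
      have h3 : (1-ε) * (-A/(1-ε)) = -A := by field_simp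
      have h4 : (1-ε) * Real.log (1-q) < ε * Real.log ε + (1-ε) * Real.log (1-ε)
          + (N:ℝ)⁻¹ * Real.log δ := by
        have h5 : -A = ε * Real.log ε + (1-ε) * Real.log (1-ε) + (N:ℝ)⁻¹ * Real.log δ := by
          rw [hA]; ring
        linarith [h2.trans_eq (h3.trans h5)]
      rw [hlogr, hlogfrac]
      nlinarith [h1, h4]
    have := (mul_lt_mul_iff_right₀ hNR).2 hperunit
    have hcancel : (N:ℝ) * ((N:ℝ)⁻¹ * Real.log δ) = Real.log δ := by
      rw [← mul_assoc, mul_inv_cancel₀ hNne, one_mul]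
    linarith [this, hcancel.le, hcancel.ge]
  -- assemble
  rw [hsetEq]
  calc (μ {ω | (∑ j, ξ j) ω ≤ ε * N}).toReal
      ≤ Real.exp (-t * (ε * N)) * mgf (∑ j, ξ j) μ t := hcher
    _ ≤ Real.exp (-t * (ε * N)) * ((1-q)/(1-ε))^N := by
        rw [hprod]
        exact mul_le_mul_of_nonneg_left (hamgm.trans_eq (by rw [havg])) (Real.exp_pos _).le
    _ = Real.exp (-t * (ε * N) + (N:ℝ) * Real.log ((1-q)/(1-ε))) := by
        rw [hpow, ← Real.exp_add]
    _ < Real.exp (Real.log δ) := Real.exp_lt_exp.2 hkey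
    _ = δ := Real.exp_log hδ0
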